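/- Let (R, m) be a complete Noetherian local domain, I an m-primary ideal, T = R[It, t^{-1}] the extended Rees algebra, and n = mT + (It)T + t^{-1}T its homogeneous maximal ideal. Then for every integer c ≥ 0, the R-module homomorphism R → T_n sending 1 to t^{-c} is pure, i.e., it remains injective after tensoring with any R-module. -/

import Mathlib

open LaurentPolynomial

/-- The extended Rees algebra `R[It, t⁻¹] = ⊕ₙ I^{max(n,0)} tⁿ ⊆ R[t, t⁻¹]`. -/
def extendedReesAlgebra (R : Type*) [CommRing R] (I : Ideal R) :
    Subalgebra R (LaurentPolynomial R) where
  carrier := {p | ∀ n : ℤ, p.coeff n ∈ I ^ n.toNat}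
  mul_mem' := by
    intro p q hp hq n
    classical
    rw [AddMonoidAlgebra.coeff_mul]
    simp only [Finsupp.sum]
    refine Submodule.sum_mem _ fun a _ => Submodule.sum_mem _ fun b _ => ?_
    split_ifs with h
    · subst h
      have h1 : p.coeff a * q.coeff b ∈ I ^ (a.toNat + b.toNat) := by
        rw [pow_add]; exact Ideal.mul_mem_mul (hp a) (hq b)
      exact Ideal.pow_le_pow_right (show (a + b).toNat ≤ a.toNat + b.toNat by omega) h1
    · exact (I ^ n.toNat).zero_mem
  one_mem' := by
    intro n
    classical
    rw [AddMonoidAlgebra.one_def, AddMonoidAlgebra.coeff_single, Finsupp.single_apply]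
    split_ifs with h
    · rw [← h, Int.toNat_zero, pow_zero, Ideal.one_eq_top]
      trivial
    · exact (I ^ n.toNat).zero_mem
  add_mem' := by
    intro p q hp hq n
    rw [AddMonoidAlgebra.coeff_add, Finsupp.add_apply]
    exact (I ^ n.toNat).add_mem (hp n) (hq n)
  zero_mem' := by intro n; rw [AddMonoidAlgebra.coeff_zero, Finsupp.coe_zero, Pi.zero_apply]; exact (I ^ n.toNat).zero_mem
  algebraMap_mem' := by
    intro r n
    classical
    have hr : (algebraMap R (LaurentPolynomial R) r) = AddMonoidAlgebra.single (0 : ℤ) r := by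
      first | rfl | simp [← single_eq_C] | simp [AddMonoidAlgebra.coe_algebraMap]
    rw [hr, AddMonoidAlgebra.coeff_single, Finsupp.single_apply]
    split_ifs with h
    · rw [← h, Int.toNat_zero, pow_zero, Ideal.one_eq_top]
      trivial
    · exact (I ^ n.toNat).zero_mem

lemma T_mem_extendedReesAlgebra {R : Type*} [CommRing R] (I : Ideal R) (n : ℤ) (hn : n ≤ 0) :
    (T n : LaurentPolynomial R) ∈ extendedReesAlgebra R I := by
  intro m
  classical
  unfold LaurentPolynomial.T
  rw [AddMonoidAlgebra.coeff_single, Finsupp.single_apply]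
  split_ifs with h
  · rw [show m.toNat = 0 by omega, pow_zero, Ideal.one_eq_top]
    trivial
  · exact (I ^ m.toNat).zero_mem


set_option synthInstance.maxHeartbeats 1000000
set_option maxHeartbeats 1000000

/-- The homogeneous maximal ideal `𝔫 = 𝔪T + (It)T + t⁻¹T` of the extended Rees algebra. -/
noncomputable def extReesMaxIdeal (R : Type*) [CommRing R] [IsLocalRing R] (I : Ideal R) :
    Ideal (extendedReesAlgebra R I) :=
  Ideal.span ((algebraMap R (extendedReesAlgebra R I)) ''
      ((IsLocalRing.maximalIdeal R : Ideal R) : Set R)) +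
    Ideal.span {p : extendedReesAlgebra R I |
      ∃ x ∈ I, (p : LaurentPolynomial R) = AddMonoidAlgebra.single (1 : ℤ) x} +
    Ideal.span {(⟨T (-1), T_mem_extendedReesAlgebra I (-1) (by norm_num)⟩ :
      extendedReesAlgebra R I)}

namespace ExtReesAux

open Finsupp

variable {R : Type*} [CommRing R] [IsLocalRing R] (I : Ideal R)

/-- `Finsupp.single`, typed as a Laurent polynomial. -/
noncomputable def sl (n : ℤ) (r : R) : LaurentPolynomial R := AddMonoidAlgebra.single n r

lemma sl_def (n : ℤ) (r : R) : sl n r = AddMonoidAlgebra.single n r := rfl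

@[simp] lemma sl_apply (n m : ℤ) (r : R) : (sl n r).coeff m = if n = m then r else 0 :=
  Finsupp.single_apply

lemma sl_mul_sl (n m : ℤ) (r s : R) : sl n r * sl m s = sl (n + m) (r * s) :=
  AddMonoidAlgebra.single_mul_single _ _ _ _

lemma T_eq_sl (n : ℤ) : (LaurentPolynomial.T n : LaurentPolynomial R) = sl n 1 := rfl

lemma sl_add (n : ℤ) (r s : R) : sl n (r + s) = sl n r + sl n s :=
  AddMonoidAlgebra.single_add n r s

lemma mul_sl_apply (f : LaurentPolynomial R) (r : R) (x y : ℤ) :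
    (f * sl x r).coeff y = f.coeff (y - x) * r := by
  rw [sl_def, AddMonoidAlgebra.coeff_mul_single_apply, sub_eq_add_neg]

lemma sl_mul_apply (r : R) (x : ℤ) (f : LaurentPolynomial R) (y : ℤ) :
    (sl x r * f).coeff y = r * f.coeff (-x + y) := by
  rw [sl_def, AddMonoidAlgebra.coeff_single_mul_apply]

/-- The element `single n r` of the extended Rees algebra. -/
noncomputable def sing (n : ℤ) (r : R) (hr : r ∈ I ^ n.toNat) : extendedReesAlgebra R I :=
  ⟨AddMonoidAlgebra.single n r, by
    intro m
    classical
    rw [AddMonoidAlgebra.coeff_single, Finsupp.single_apply]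
    split_ifs with h
    · exact h ▸ hr
    · exact (I ^ m.toNat).zero_mem⟩

@[simp] lemma coe_sing (n : ℤ) (r : R) (hr : r ∈ I ^ n.toNat) :
    ((sing I n r hr : extendedReesAlgebra R I) : LaurentPolynomial R) = AddMonoidAlgebra.single n r := rfl

lemma coe_algebraMap_eq (r : R) :
    ((algebraMap R (extendedReesAlgebra R I) r : extendedReesAlgebra R I) :
      LaurentPolynomial R) = AddMonoidAlgebra.single (0 : ℤ) r := by
  have : ((algebraMap R (extendedReesAlgebra R I) r : extendedReesAlgebra R I) :
      LaurentPolynomial R) = algebraMap R (LaurentPolynomial R) r := rfl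
  rw [this]
  rfl

lemma I_le_m (hI : I.radical = IsLocalRing.maximalIdeal R) :
    I ≤ IsLocalRing.maximalIdeal R := hI ▸ Ideal.le_radical

/-- Key computation: if the constant term of `P` vanishes, all contributions to the
constant term of `P * Q` lie in the maximal ideal. -/
lemma coeff_mul_zero_mem (hI : I.radical = IsLocalRing.maximalIdeal R)
    (P Q : LaurentPolynomial R) (hP : ∀ n : ℤ, P.coeff n ∈ I ^ n.toNat)
    (hQ : ∀ n : ℤ, Q.coeff n ∈ I ^ n.toNat) (h0 : P.coeff 0 = 0) :
    (P * Q).coeff 0 ∈ IsLocalRing.maximalIdeal R := by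
  classical
  rw [AddMonoidAlgebra.coeff_mul]
  rw [Finsupp.sum]
  refine Submodule.sum_mem _ fun a _ => ?_
  rw [Finsupp.sum]
  refine Submodule.sum_mem _ fun b _ => ?_
  split_ifs with hab
  · rcases lt_trichotomy a 0 with h | h | h
    · have hb : Q.coeff b ∈ IsLocalRing.maximalIdeal R :=
        I_le_m I hI (Ideal.pow_le_self (by omega) (hQ b))
      exact Ideal.mul_mem_left _ _ hb
    · rw [h, h0, zero_mul]; exact zero_mem _
    · have ha : P.coeff a ∈ IsLocalRing.maximalIdeal R :=
        I_le_m I hI (Ideal.pow_le_self (by omega) (hP a))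
      exact Ideal.mul_mem_right _ _ ha
  · exact zero_mem _

lemma coeff_mul_sub_mem (hI : I.radical = IsLocalRing.maximalIdeal R)
    (P Q : LaurentPolynomial R) (hP : ∀ n : ℤ, P.coeff n ∈ I ^ n.toNat)
    (hQ : ∀ n : ℤ, Q.coeff n ∈ I ^ n.toNat) :
    (P * Q).coeff 0 - P.coeff 0 * Q.coeff 0 ∈ IsLocalRing.maximalIdeal R := by
  classical
  have h := coeff_mul_zero_mem I hI (P - sl 0 (P.coeff 0)) Q ?_ hQ ?_
  · rw [sub_mul] at h
    rw [AddMonoidAlgebra.coeff_sub, Finsupp.sub_apply] at h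
    rwa [sl_mul_apply, neg_zero, zero_add] at h
  · intro n
    rw [AddMonoidAlgebra.coeff_sub, Finsupp.sub_apply, sl_apply]
    split_ifs with h
    · rw [← h, sub_self]; exact zero_mem _
    · rw [sub_zero]; exact hP n
  · rw [AddMonoidAlgebra.coeff_sub, Finsupp.sub_apply, sl_apply, if_pos rfl, sub_self]

variable (R) in
/-- The set of elements of the extended Rees algebra whose constant term lies in the
maximal ideal, as an ideal.  It coincides with `extReesMaxIdeal`. -/
def KIdeal (hI : I.radical = IsLocalRing.maximalIdeal R) :
    Ideal (extendedReesAlgebra R I) where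
  carrier := {p | (p : LaurentPolynomial R).coeff 0 ∈ IsLocalRing.maximalIdeal R}
  add_mem' := by
    intro p q hp hq
    simp only [Set.mem_setOf_eq, Subalgebra.coe_add, AddMonoidAlgebra.coeff_add, Finsupp.add_apply] at hp hq ⊢
    exact add_mem hp hq
  zero_mem' := by
    simp only [Set.mem_setOf_eq, ZeroMemClass.coe_zero, AddMonoidAlgebra.coeff_zero, Finsupp.coe_zero, Pi.zero_apply]
    exact zero_mem _
  smul_mem' := by
    intro q p hp
    simp only [Set.mem_setOf_eq, smul_eq_mul, MulMemClass.coe_mul] at hp ⊢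
    have h := coeff_mul_sub_mem I hI (q : LaurentPolynomial R) (p : LaurentPolynomial R)
      q.2 p.2
    have : ((q : LaurentPolynomial R) * p).coeff 0 =
        (((q : LaurentPolynomial R) * p).coeff 0 - (q : LaurentPolynomial R).coeff 0 *
          (p : LaurentPolynomial R).coeff 0) + (q : LaurentPolynomial R).coeff 0 *
          (p : LaurentPolynomial R).coeff 0 := by ring
    rw [this]
    exact add_mem h (Ideal.mul_mem_left _ _ hp)

lemma mem_KIdeal_iff (hI : I.radical = IsLocalRing.maximalIdeal R)
    (p : extendedReesAlgebra R I) :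
    p ∈ KIdeal R I hI ↔ (p : LaurentPolynomial R).coeff 0 ∈ IsLocalRing.maximalIdeal R :=
  Iff.rfl

/-- Every "monomial" of the Rees algebra with the obvious necessary condition on its
coefficient lies in the homogeneous maximal ideal. -/
lemma sing_mem_n (n : ℤ) (r : R) (hr : r ∈ I ^ n.toNat)
    (h0 : n = 0 → r ∈ IsLocalRing.maximalIdeal R) :
    sing I n r hr ∈ extReesMaxIdeal R I := by
  classical
  rcases lt_trichotomy n 0 with h | h | h
  · -- negative degree: multiple of t⁻¹
    unfold extReesMaxIdeal
    rw [Submodule.add_eq_sup]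
    refine Submodule.mem_sup_right ?_
    rw [Ideal.mem_span_singleton]
    refine ⟨sing I (n + 1) r (by
      rw [show (n + 1).toNat = 0 by omega, pow_zero, Ideal.one_eq_top]; trivial), ?_⟩
    apply Subtype.ext
    show sl n r = LaurentPolynomial.T (-1) * sl (n + 1) r
    rw [T_eq_sl, sl_mul_sl, one_mul]
    congr 1
    omega
  · -- degree zero
    subst h
    have : sing I 0 r hr = algebraMap R (extendedReesAlgebra R I) r := by
      apply Subtype.ext
      rw [coe_sing, coe_algebraMap_eq]
    rw [this]
    unfold extReesMaxIdeal
    rw [Submodule.add_eq_sup, Submodule.add_eq_sup]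
    exact Submodule.mem_sup_left (Submodule.mem_sup_left (Ideal.subset_span ⟨r, h0 rfl, rfl⟩))
  · -- positive degree
    have hk : n.toNat = (n - 1).toNat + 1 := by omega
    have hr' : r ∈ I * I ^ (n - 1).toNat := by
      rw [← pow_succ', ← hk]; exact hr
    have key : ∃ hx : r ∈ I ^ n.toNat, sing I n r hx ∈ extReesMaxIdeal R I := by
      refine Submodule.mul_induction_on hr' ?_ ?_
      · intro x hx y hy
        have hxy : x * y ∈ I ^ n.toNat := by
          rw [hk, pow_succ']; exact Ideal.mul_mem_mul hx hy
        refine ⟨hxy, ?_⟩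
        have h1 : sing I n (x * y) hxy =
            sing I 1 x (by simpa using hx) * sing I (n - 1) y hy := by
          apply Subtype.ext
          show sl n (x * y) = sl 1 x * sl (n - 1) y
          rw [sl_mul_sl]
          congr 1
          omega
        rw [h1]
        have h2 : sing I 1 x (by simpa using hx) ∈
            Ideal.span {p : extendedReesAlgebra R I |
              ∃ z ∈ I, (p : LaurentPolynomial R) = AddMonoidAlgebra.single (1 : ℤ) z} :=
          Ideal.subset_span ⟨x, hx, rfl⟩
        unfold extReesMaxIdeal
        rw [Submodule.add_eq_sup, Submodule.add_eq_sup]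
        exact Submodule.mem_sup_left (Submodule.mem_sup_right (Ideal.mul_mem_right _ _ h2))
      · rintro x y ⟨hx, hxn⟩ ⟨hy, hyn⟩
        refine ⟨add_mem hx hy, ?_⟩
        have : sing I n (x + y) (add_mem hx hy) = sing I n x hx + sing I n y hy := by
          apply Subtype.ext
          show sl n (x + y) = sl n x + sl n y
          rw [sl_add]
        rw [this]
        exact Ideal.add_mem _ hxn hyn
    obtain ⟨hx, hmem⟩ := key
    exact hmem

lemma mem_n_of_coeff (p : extendedReesAlgebra R I)
    (h0 : (p : LaurentPolynomial R).coeff 0 ∈ IsLocalRing.maximalIdeal R) :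
    p ∈ extReesMaxIdeal R I := by
  classical
  have hp : ∀ n : ℤ, (p : LaurentPolynomial R).coeff n ∈ I ^ n.toNat := p.2
  have hdec : p = ∑ n ∈ (p : LaurentPolynomial R).coeff.support,
      sing I n ((p : LaurentPolynomial R).coeff n) (hp n) := by
    apply Subtype.ext
    rw [AddSubmonoidClass.coe_finset_sum]
    simp only [coe_sing]
    exact (AddMonoidAlgebra.sum_coeff_single (p : LaurentPolynomial R)).symm
  rw [hdec]
  refine Submodule.sum_mem _ fun n _ => ?_
  refine sing_mem_n I n _ (hp n) fun hn => ?_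
  rw [← hn] at h0
  exact h0

lemma n_eq_K (hI : I.radical = IsLocalRing.maximalIdeal R) :
    extReesMaxIdeal R I = KIdeal R I hI := by
  apply le_antisymm
  · unfold extReesMaxIdeal
    rw [Submodule.add_eq_sup, Submodule.add_eq_sup]
    refine sup_le (sup_le ?_ ?_) ?_
    · rw [Ideal.span_le]
      rintro _ ⟨r, hr, rfl⟩
      rw [SetLike.mem_coe, mem_KIdeal_iff, coe_algebraMap_eq, AddMonoidAlgebra.coeff_single, Finsupp.single_apply,
        if_pos rfl]
      exact hr
    · rw [Ideal.span_le]
      rintro p ⟨x, _, hx2⟩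
      rw [SetLike.mem_coe, mem_KIdeal_iff, hx2, AddMonoidAlgebra.coeff_single, Finsupp.single_apply, if_neg (by norm_num)]
      exact zero_mem _
    · rw [Ideal.span_le, Set.singleton_subset_iff]
      rw [SetLike.mem_coe, mem_KIdeal_iff]
      show (LaurentPolynomial.T (-1) : LaurentPolynomial R).coeff 0 ∈ _
      rw [T_eq_sl, sl_apply, if_neg (by norm_num)]
      exact zero_mem _
  · intro p hp
    exact mem_n_of_coeff I p hp

lemma n_isPrime (hI : I.radical = IsLocalRing.maximalIdeal R) :
    (extReesMaxIdeal R I).IsPrime := by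
  rw [n_eq_K I hI]
  constructor
  · intro h
    have h1 : (1 : extendedReesAlgebra R I) ∈ KIdeal R I hI := h ▸ Submodule.mem_top
    rw [mem_KIdeal_iff] at h1
    rw [OneMemClass.coe_one, AddMonoidAlgebra.one_def, AddMonoidAlgebra.coeff_single, Finsupp.single_apply, if_pos rfl] at h1
    exact (IsLocalRing.maximalIdeal.isMaximal R).ne_top ((Ideal.eq_top_iff_one _).mpr h1)
  · intro p q hpq
    rw [mem_KIdeal_iff, MulMemClass.coe_mul] at hpq
    have hsub := coeff_mul_sub_mem I hI (p : LaurentPolynomial R) (q : LaurentPolynomial R)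
      p.2 q.2
    have hm : (p : LaurentPolynomial R).coeff 0 * (q : LaurentPolynomial R).coeff 0 ∈
        IsLocalRing.maximalIdeal R := by
      have : (p : LaurentPolynomial R).coeff 0 * (q : LaurentPolynomial R).coeff 0 =
          ((p : LaurentPolynomial R) * q).coeff 0 -
            (((p : LaurentPolynomial R) * q).coeff 0 -
              (p : LaurentPolynomial R).coeff 0 * (q : LaurentPolynomial R).coeff 0) := by ring
      rw [this]
      exact sub_mem hpq hsub
    rcases ((IsLocalRing.maximalIdeal.isMaximal R).isPrime.mem_or_mem hm) with h | h
    · exact Or.inl h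
    · exact Or.inr h

/-- Projection onto the coefficient of `tᶜ`, as an `R`-linear map. -/
def coeffLin (c : ℤ) : extendedReesAlgebra R I →ₗ[R] R where
  toFun p := (p : LaurentPolynomial R).coeff c
  map_add' p q := by
    simp only [Subalgebra.coe_add]
    rfl
  map_smul' r p := by
    simp only [SetLike.val_smul, RingHom.id_apply]
    rfl

@[simp] lemma coeffLin_apply (c : ℤ) (p : extendedReesAlgebra R I) :
    coeffLin I c p = (p : LaurentPolynomial R).coeff c := rfl

end ExtReesAux


set_option maxHeartbeats 4000000
set_option synthInstance.maxHeartbeats 4000000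

/-- Let `(R,𝔪)` be a complete Noetherian local domain, `I` an `𝔪`-primary ideal,
`T = R[It,t⁻¹]` the extended Rees algebra and `𝔫` its homogeneous maximal ideal.  Then
(`𝔫` is prime and) for every `c ≥ 0` the `R`-module map `R → T_𝔫` sending `1` to `t⁻ᶜ`
is pure: it stays injective after tensoring with an arbitrary `R`-module `M`. -/
theorem extendedReesAlgebra_localization_pure
    {R : Type u} [CommRing R] [IsDomain R] [IsNoetherianRing R] [IsLocalRing R]
    [IsAdicComplete (IsLocalRing.maximalIdeal R) R]
    (I : Ideal R) (hI : I.radical = IsLocalRing.maximalIdeal R) :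
    ∃ hp : (extReesMaxIdeal R I).IsPrime,
      ∀ (c : ℕ) (M : Type u) [AddCommGroup M] [Module R M],
        let Tn := Localization (@Ideal.primeCompl _ _ (extReesMaxIdeal R I) hp)
        let _i : Algebra R Tn :=
          ((algebraMap (extendedReesAlgebra R I) Tn).comp
            (algebraMap R (extendedReesAlgebra R I))).toAlgebra
        Function.Injective
          (LinearMap.lTensor M
            (LinearMap.toSpanSingleton R Tn
              (algebraMap (extendedReesAlgebra R I) Tn
                ⟨T (-(c : ℤ)), T_mem_extendedReesAlgebra I (-(c : ℤ)) (by omega)⟩))) := by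
  classical
  refine ⟨ExtReesAux.n_isPrime I hI, ?_⟩
  intro c M instAG instMod Tn alg
  set A := extendedReesAlgebra R I with hA
  set S := @Ideal.primeCompl _ _ (extReesMaxIdeal R I) (ExtReesAux.n_isPrime I hI) with hS
  set a : A := ⟨T (-(c : ℤ)), T_mem_extendedReesAlgebra I (-(c : ℤ)) (by omega)⟩ with ha
  set τ : Tn := algebraMap A Tn a with hτ
  -- the element-level statement
  have hcore : ∀ x y : M, x ⊗ₜ[R] τ = y ⊗ₜ[R] τ → x = y := by
    intro x y hx
    -- move to `Tn ⊗[R] M`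
    have h2 : τ ⊗ₜ[R] x = τ ⊗ₜ[R] y := by
      have := congrArg (TensorProduct.comm R M Tn) hx
      rwa [TensorProduct.comm_tmul, TensorProduct.comm_tmul] at this
    -- move to `Tn ⊗[A] (A ⊗[R] M)`
    have h3 : τ ⊗ₜ[A] ((1 : A) ⊗ₜ[R] x) = τ ⊗ₜ[A] ((1 : A) ⊗ₜ[R] y) := by
      have := congrArg (TensorProduct.AlgebraTensorModule.cancelBaseChange R A A Tn M).symm h2
      rwa [TensorProduct.AlgebraTensorModule.cancelBaseChange_symm_tmul,
        TensorProduct.AlgebraTensorModule.cancelBaseChange_symm_tmul] at this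
    have e1 : ∀ m : M, a • ((1 : A) ⊗ₜ[R] m) = a ⊗ₜ[R] m := by
      intro m
      rw [TensorProduct.smul_tmul', smul_eq_mul, mul_one]
    have key : ∀ m : M, τ ⊗ₜ[A] ((1 : A) ⊗ₜ[R] m) = (1 : Tn) ⊗ₜ[A] (a ⊗ₜ[R] m) := by
      intro m
      rw [← e1 m, ← TensorProduct.smul_tmul, hτ, Algebra.algebraMap_eq_smul_one a]
    have h4 : (1 : Tn) ⊗ₜ[A] (a ⊗ₜ[R] x) = (1 : Tn) ⊗ₜ[A] (a ⊗ₜ[R] y) := by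
      rw [← key x, ← key y]
      exact h3
    -- move to the localized module
    set N := TensorProduct R A M with hN
    set f := LocalizedModule.mkLinearMap S N with hf
    have hbc : IsBaseChange Tn f := IsLocalizedModule.isBaseChange S Tn f
    have h5 : f (a ⊗ₜ[R] x) = f (a ⊗ₜ[R] y) := by
      have := congrArg hbc.equiv h4
      rwa [IsBaseChange.equiv_tmul, IsBaseChange.equiv_tmul, one_smul, one_smul] at this
    obtain ⟨s, hs⟩ := IsLocalizedModule.exists_of_eq (S := S) (f := f) h5
    -- rewrite the annihilation equation
    have hs' : ((s : A) * a) ⊗ₜ[R] x = ((s : A) * a) ⊗ₜ[R] y := by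
      rw [← smul_eq_mul, ← TensorProduct.smul_tmul', ← TensorProduct.smul_tmul']
      exact hs
    -- apply the coefficient projection
    have h6 : ((((s : A) * a : A) : LaurentPolynomial R).coeff (-(c : ℤ))) • x =
        ((((s : A) * a : A) : LaurentPolynomial R).coeff (-(c : ℤ))) • y := by
      have := congrArg
        ((TensorProduct.lid R M).toLinearMap.comp
          (LinearMap.rTensor M (ExtReesAux.coeffLin I (-(c : ℤ))))) hs'
      simpa [LinearMap.rTensor_tmul, ExtReesAux.coeffLin_apply] using this
    have h7 : (((s : A) * a : A) : LaurentPolynomial R).coeff (-(c : ℤ)) =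
        ((s : A) : LaurentPolynomial R).coeff 0 := by
      rw [MulMemClass.coe_mul,
        show ((a : A) : LaurentPolynomial R) = ExtReesAux.sl (-(c : ℤ)) 1 from rfl,
        ExtReesAux.mul_sl_apply, sub_self, mul_one]
    rw [h7] at h6
    -- the constant coefficient of `s` is a unit
    have hsu : IsUnit (((s : A) : LaurentPolynomial R).coeff 0) := by
      rw [← IsLocalRing.notMem_maximalIdeal]
      intro hmem
      exact s.2 (ExtReesAux.mem_n_of_coeff I (s : A) hmem)
    obtain ⟨u, hu⟩ := hsu
    have hx' : x = (↑u⁻¹ : R) • (((u : R)) • x) := by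
      rw [← mul_smul, Units.inv_mul, one_smul]
    have hy' : y = (↑u⁻¹ : R) • (((u : R)) • y) := by
      rw [← mul_smul, Units.inv_mul, one_smul]
    rw [hx', hy', hu, h6]
  -- deduce injectivity
  intro z w hzw
  set g := LinearMap.toSpanSingleton R Tn τ with hg
  have hrid : ∀ z : TensorProduct R M R,
      LinearMap.lTensor M g z = ((TensorProduct.rid R M) z) ⊗ₜ[R] τ := by
    intro z
    induction z using TensorProduct.induction_on with
    | zero => simp
    | tmul m r =>
        rw [LinearMap.lTensor_tmul, TensorProduct.rid_tmul,
          LinearMap.toSpanSingleton_apply, TensorProduct.smul_tmul]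
    | add p q hp hq => rw [map_add, map_add, TensorProduct.add_tmul, hp, hq]
  rw [hrid z, hrid w] at hzw
  exact (TensorProduct.rid R M).injective (hcore _ _ hzw)
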